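/- (Claim 2 of the paper) Let k be a positive integer, m = ∏_{p ≤ √k} p^(⌊log_p k⌋), M = lcm{1, ..., k}, and suppose x ≡ 1 (mod m), y ≡ 0 (mod m), and for each prime p with √k < p ≤ k we have x mod p ≤ p - (k mod p) with x mod p ≥ 1, and y mod p ≥ p - (k mod p). Then (y(y+1)···(y+k)) / lcm{y, ..., y+k} = M · (x(x+1)···(x+k-1)) / lcm{x, ..., x+k-1}. -/

import Mathlib

open Finset

/-- counting multiples of `d` in `Icc a b` -/
lemma count_Icc_dvd (d a b : ℕ) (ha : 0 < a) :
    ((Icc a b).filter (d ∣ ·)).card = b / d - (a - 1) / d := by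
  by_cases hab : a - 1 ≤ b
  · have h1 : Icc a b = Ioc (a - 1) b := by ext i; simp only [Finset.mem_Icc, Finset.mem_Ioc]; omega
    have h2 : Ioc 0 (a-1) ∪ Ioc (a-1) b = Ioc 0 b :=
      Finset.Ioc_union_Ioc_eq_Ioc (Nat.zero_le _) hab
    have hdisj : Disjoint (Ioc 0 (a-1)) (Ioc (a-1) b) := by
      simp [Finset.disjoint_left]; omega
    have h3 : ((Ioc 0 (a-1)).filter (d ∣ ·)).card + ((Ioc (a-1) b).filter (d ∣ ·)).card
        = ((Ioc 0 b).filter (d ∣ ·)).card := by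
      rw [← Finset.card_union_of_disjoint (Finset.disjoint_filter_filter hdisj),
        ← Finset.filter_union, h2]
    rw [h1]
    have e1 := Nat.Ioc_filter_dvd_card_eq_div (a-1) d
    have e2 := Nat.Ioc_filter_dvd_card_eq_div b d
    omega
  · have h1 : Icc a b = ∅ := by
      apply Finset.Icc_eq_empty; omega
    have h2 : b / d ≤ (a - 1) / d := Nat.div_le_div_right (by omega)
    rw [h1]; simp; omega

lemma count_x (q k x : ℕ) (hq : 0 < q) (hx : 0 < x) (hr1 : 1 ≤ x % q)
    (hr2 : x % q + k % q ≤ q) :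
    ((Icc x (x + k - 1)).filter (q ∣ ·)).card = k / q := by
  rw [count_Icc_dvd q _ _ hx]
  have hxd := Nat.div_add_mod x q
  have hkd := Nat.div_add_mod k q
  have hxm : x % q < q := Nat.mod_lt _ hq
  have hkm : k % q < q := Nat.mod_lt _ hq
  have d0 : (x % q - 1) / q = 0 := Nat.div_eq_of_lt (by omega)
  have d0' : (x % q + k % q - 1) / q = 0 := Nat.div_eq_of_lt (by omega)
  have d1 : (x - 1) / q = x / q := by
    have e1 : x - 1 = q * (x / q) + (x % q - 1) := by omega
    rw [e1, Nat.mul_add_div hq, d0, Nat.add_zero]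
  have d2 : (x + k - 1) / q = x / q + k / q := by
    have e2 : x + k - 1 = q * (x / q + k / q) + (x % q + k % q - 1) := by
      rw [Nat.mul_add]; omega
    rw [e2, Nat.mul_add_div hq, d0', Nat.add_zero]
  rw [d1, d2, Nat.add_sub_cancel_left]

lemma count_y0 (q k y : ℕ) (hq : 0 < q) (hy : 0 < y) (h : q ∣ y) :
    ((Icc y (y + k)).filter (q ∣ ·)).card = k / q + 1 := by
  rw [count_Icc_dvd q _ _ hy]
  obtain ⟨v, rfl⟩ := h
  have hv : 1 ≤ v := by
    rcases Nat.eq_zero_or_pos v with h | h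
    · simp [h] at hy
    · exact h
  have hkd := Nat.div_add_mod k q
  have hkm : k % q < q := Nat.mod_lt _ hq
  have d0 : (q - 1) / q = 0 := Nat.div_eq_of_lt (by omega)
  have d0' : (k % q) / q = 0 := Nat.div_eq_of_lt (by omega)
  have d1 : (q * v - 1) / q = v - 1 := by
    have e1 : q * v - 1 = q * (v - 1) + (q - 1) := by
      rcases v with _ | v
      · omega
      · simp [Nat.mul_succ]; omega
    rw [e1, Nat.mul_add_div hq, d0, Nat.add_zero]
  have d2 : (q * v + k) / q = v + k / q := by
    have e2 : q * v + k = q * (v + k / q) + k % q := by rw [Nat.mul_add]; omega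
    rw [e2, Nat.mul_add_div hq, d0', Nat.add_zero]
  rw [d1, d2]
  generalize k / q = w
  omega

lemma count_y1 (q k y : ℕ) (hq : 0 < q) (hy : 0 < y) (hs : 1 ≤ k % q)
    (h : q - k % q ≤ y % q) :
    ((Icc y (y + k)).filter (q ∣ ·)).card = k / q + 1 := by
  rw [count_Icc_dvd q _ _ hy]
  have hyd := Nat.div_add_mod y q
  have hkd := Nat.div_add_mod k q
  have hym : y % q < q := Nat.mod_lt _ hq
  have hkm : k % q < q := Nat.mod_lt _ hq
  have d0 : (y % q - 1) / q = 0 := Nat.div_eq_of_lt (by omega)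
  have d0' : (y % q + k % q - q) / q = 0 := Nat.div_eq_of_lt (by omega)
  have d1 : (y - 1) / q = y / q := by
    have e1 : y - 1 = q * (y / q) + (y % q - 1) := by omega
    rw [e1, Nat.mul_add_div hq, d0, Nat.add_zero]
  have d2 : (y + k) / q = y / q + k / q + 1 := by
    have e2 : y + k = q * (y / q + k / q + 1) + (y % q + k % q - q) := by
      rw [Nat.mul_add, Nat.mul_add]; omega
    rw [e2, Nat.mul_add_div hq, d0', Nat.add_zero]
  rw [d1, d2]
  generalize y / q = w
  generalize k / q = w'
  omega

lemma count_le_one (q a b : ℕ) (hq : 0 < q) (ha : 0 < a) (h : b < a + q) :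
    ((Icc a b).filter (q ∣ ·)).card ≤ 1 := by
  rw [count_Icc_dvd q _ _ ha]
  have h1 : b / q ≤ (a - 1 + q) / q := Nat.div_le_div_right (by omega)
  have h2 : (a - 1 + q) / q = (a-1)/q + 1 := by
    rw [Nat.add_div_right _ hq]
  omega

lemma lcm_ne_zero' (s : Finset ℕ) (hs : ∀ i ∈ s, i ≠ 0) : s.lcm id ≠ 0 := by
  induction s using Finset.induction_on with
  | empty => simp
  | @insert a t ha ih =>
    have h1 : a ≠ 0 := hs a (Finset.mem_insert_self a t)
    have h2 : t.lcm id ≠ 0 := ih (fun i hi => hs i (Finset.mem_insert_of_mem hi))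
    rw [Finset.lcm_insert, lcm_eq_nat_lcm]
    exact Nat.lcm_ne_zero h1 h2

lemma lcm_factorization (p : ℕ) (s : Finset ℕ) (hs : ∀ i ∈ s, i ≠ 0) :
    (s.lcm id).factorization p = s.sup (fun i => i.factorization p) := by
  induction s using Finset.induction_on with
  | empty => simp
  | @insert a t ha ih =>
    have h1 : a ≠ 0 := hs a (Finset.mem_insert_self a t)
    have h2 : ∀ i ∈ t, i ≠ 0 := fun i hi => hs i (Finset.mem_insert_of_mem hi)
    have h3 : t.lcm id ≠ 0 := lcm_ne_zero' t h2
    rw [Finset.lcm_insert, Finset.sup_insert, ← ih h2]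
    show (Nat.lcm a (t.lcm id)).factorization p = a.factorization p ⊔ (t.lcm id).factorization p
    rw [Nat.factorization_lcm h1 h3, Finsupp.sup_apply]

lemma fact_sum (p i N : ℕ) (hp : p.Prime) (hi : i ≠ 0) (hiN : i < N) :
    i.factorization p = ∑ j ∈ Ico 1 N, (if p ^ j ∣ i then 1 else 0) := by
  rw [← Finset.card_filter]
  have h1 : (Ico 1 N).filter (fun j => p ^ j ∣ i) = Icc 1 (i.factorization p) := by
    ext j
    simp only [Finset.mem_filter, Finset.mem_Ico, Finset.mem_Icc]
    constructor
    · rintro ⟨⟨h1, h2⟩, h3⟩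
      exact ⟨h1, (hp.pow_dvd_iff_le_factorization hi).mp h3⟩
    · rintro ⟨h1, h2⟩
      have := Nat.factorization_lt p hi
      exact ⟨⟨h1, by omega⟩, (hp.pow_dvd_iff_le_factorization hi).mpr h2⟩
  rw [h1, Nat.card_Icc]; omega

lemma sup_sum (p N : ℕ) (hp : p.Prime) (s : Finset ℕ) (hs : ∀ i ∈ s, i ≠ 0)
    (hN : ∀ i ∈ s, i < N) (hN0 : 0 < N) :
    s.sup (fun i => i.factorization p)
      = ∑ j ∈ Ico 1 N, (if 0 < (s.filter (p ^ j ∣ ·)).card then 1 else 0) := by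
  rw [← Finset.card_filter]
  set V := s.sup (fun i => i.factorization p) with hV
  have hVN : V < N := by
    rw [hV, Finset.sup_lt_iff hN0]
    intro i hi
    exact lt_of_lt_of_le (Nat.factorization_lt p (hs i hi)) (le_of_lt (hN i hi))
  have h1 : (Ico 1 N).filter (fun j => 0 < (s.filter (p ^ j ∣ ·)).card) = Icc 1 V := by
    ext j
    simp only [Finset.mem_filter, Finset.mem_Ico, Finset.mem_Icc, Finset.card_pos,
      Finset.filter_nonempty_iff]
    constructor
    · rintro ⟨⟨h1, h2⟩, i, hi, h3⟩
      refine ⟨h1, ?_⟩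
      rw [hV]
      exact le_trans ((hp.pow_dvd_iff_le_factorization (hs i hi)).mp h3)
        (Finset.le_sup (f := fun i => i.factorization p) hi)
    · rintro ⟨h1, h2⟩
      obtain ⟨i, hi, h3⟩ := (Finset.le_sup_iff (show (⊥:ℕ) < j by simp only [Nat.bot_eq_zero]; omega)).mp h2
      exact ⟨⟨h1, by omega⟩, i, hi, (hp.pow_dvd_iff_le_factorization (hs i hi)).mpr h3⟩
  rw [h1, Nat.card_Icc]; omega

theorem claim_two (k x y m M : ℕ) (hk : 0 < k) (hx : 0 < x) (hy : 0 < y)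
    (hm : m = ∏ p ∈ (Finset.Icc 1 k).filter (fun p => p.Prime ∧ p ≤ Nat.sqrt k),
      p ^ Nat.log p k)
    (hM : M = (Finset.Icc 1 k).lcm id)
    (hxm : x ≡ 1 [MOD m]) (hym : y ≡ 0 [MOD m])
    (hres : ∀ p : ℕ, p.Prime → Nat.sqrt k < p → p ≤ k →
      1 ≤ x % p ∧ x % p ≤ p - k % p ∧ p - k % p ≤ y % p) :
    (∏ i ∈ Finset.Icc y (y + k), i) * (Finset.Icc x (x + k - 1)).lcm id =
      M * (∏ i ∈ Finset.Icc x (x + k - 1), i) * (Finset.Icc y (y + k)).lcm id := by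
  classical
  have hPne : ∀ i ∈ Icc x (x + k - 1), i ≠ 0 := by
    intro i hi; rw [Finset.mem_Icc] at hi; omega
  have hQne : ∀ i ∈ Icc y (y + k), i ≠ 0 := by
    intro i hi; rw [Finset.mem_Icc] at hi; omega
  have hRne : ∀ i ∈ Icc 1 k, i ≠ 0 := by
    intro i hi; rw [Finset.mem_Icc] at hi; omega
  have hprodP : (∏ i ∈ Icc x (x + k - 1), i) ≠ 0 := Finset.prod_ne_zero_iff.mpr hPne
  have hprodQ : (∏ i ∈ Icc y (y + k), i) ≠ 0 := Finset.prod_ne_zero_iff.mpr hQne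
  have hlcmP : (Icc x (x + k - 1)).lcm id ≠ 0 := lcm_ne_zero' _ hPne
  have hlcmQ : (Icc y (y + k)).lcm id ≠ 0 := lcm_ne_zero' _ hQne
  have hM0 : M ≠ 0 := by rw [hM]; exact lcm_ne_zero' _ hRne
  refine Nat.factorization_inj ?_ ?_ (Finsupp.ext fun p => ?_)
  · exact mul_ne_zero hprodQ hlcmP
  · exact mul_ne_zero (mul_ne_zero hM0 hprodP) hlcmQ
  by_cases hp : p.Prime
  swap
  · rw [Nat.factorization_eq_zero_of_not_prime _ hp,
      Nat.factorization_eq_zero_of_not_prime _ hp]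
  set N := x + y + k + 2 with hN
  have hNP : ∀ i ∈ Icc x (x + k - 1), i < N := by
    intro i hi; rw [Finset.mem_Icc] at hi; omega
  have hNQ : ∀ i ∈ Icc y (y + k), i < N := by
    intro i hi; rw [Finset.mem_Icc] at hi; omega
  have hNR : ∀ i ∈ Icc 1 k, i < N := by
    intro i hi; rw [Finset.mem_Icc] at hi; omega
  have eprod : ∀ (s : Finset ℕ), (∀ i ∈ s, i ≠ 0) → (∀ i ∈ s, i < N) →
      (∏ i ∈ s, i).factorization p
        = ∑ j ∈ Ico 1 N, ((s.filter (p ^ j ∣ ·)).card) := by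
    intro s h1 h2
    rw [show (∏ i ∈ s, i) = s.prod (fun i => i) from rfl, Nat.factorization_prod h1,
      Finset.sum_apply',
      Finset.sum_congr rfl (fun i hi => fact_sum p i N hp (h1 i hi) (h2 i hi)),
      Finset.sum_comm]
    exact Finset.sum_congr rfl (fun j _ => (Finset.card_filter _ _).symm)
  have elcm : ∀ (s : Finset ℕ), (∀ i ∈ s, i ≠ 0) → (∀ i ∈ s, i < N) →
      (s.lcm id).factorization p
        = ∑ j ∈ Ico 1 N, (if 0 < (s.filter (p ^ j ∣ ·)).card then 1 else 0) := by
    intro s h1 h2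
    rw [lcm_factorization p s h1, sup_sum p N hp s h1 h2 (by omega)]
  rw [Nat.factorization_mul hprodQ hlcmP,
    Nat.factorization_mul (mul_ne_zero hM0 hprodP) hlcmQ,
    Nat.factorization_mul hM0 hprodP]
  simp only [Finsupp.coe_add, Pi.add_apply]
  rw [eprod _ hQne hNQ, eprod _ hPne hNP, elcm _ hPne hNP, elcm _ hQne hNQ,
    hM, elcm _ hRne hNR, ← Finset.sum_add_distrib, ← Finset.sum_add_distrib,
    ← Finset.sum_add_distrib]
  refine Finset.sum_congr rfl fun j hj => ?_
  rw [Finset.mem_Ico] at hj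
  have hq2 : 2 ≤ p ^ j := le_trans hp.two_le (Nat.le_self_pow (by omega) p)
  have hq0 : 0 < p ^ j := by omega
  have hC : (Finset.filter (p ^ j ∣ ·) (Icc 1 k)).card = k / p ^ j := by
    rw [count_Icc_dvd _ _ _ Nat.one_pos]
    simp
  by_cases hqk : p ^ j ≤ k
  · -- small prime power case
    have hkq1 : 1 ≤ k / p ^ j := (Nat.one_le_div_iff hq0).mpr hqk
    have hkmq : k % p ^ j < p ^ j := Nat.mod_lt _ hq0
    have hAB : (Finset.filter (p ^ j ∣ ·) (Icc x (x + k - 1))).card = k / p ^ j ∧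
        (Finset.filter (p ^ j ∣ ·) (Icc y (y + k))).card = k / p ^ j + 1 := by
      by_cases hple : p ≤ Nat.sqrt k
      · have hpk : p ≤ k := le_trans hple (Nat.sqrt_le_self k)
        have hmem : p ∈ (Icc 1 k).filter (fun p => p.Prime ∧ p ≤ Nat.sqrt k) := by
          rw [Finset.mem_filter, Finset.mem_Icc]
          exact ⟨⟨hp.one_lt.le.trans' (by omega), hpk⟩, hp, hple⟩
        have hdvd : p ^ j ∣ m := by
          rw [hm]
          exact dvd_trans (pow_dvd_pow p ((Nat.le_log_iff_pow_le hp.one_lt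
            (by omega)).mpr hqk)) (Finset.dvd_prod_of_mem _ hmem)
        have hxq : x % p ^ j = 1 := by
          have h := Nat.ModEq.of_dvd hdvd hxm
          unfold Nat.ModEq at h
          rw [h, Nat.mod_eq_of_lt (by omega)]
        have hyq : p ^ j ∣ y := Nat.modEq_zero_iff_dvd.mp (Nat.ModEq.of_dvd hdvd hym)
        exact ⟨count_x _ k x hq0 hx (by omega) (by omega),
          count_y0 _ k y hq0 hy hyq⟩
      · have hsq : Nat.sqrt k < p := by omega
        have hj1 : j = 1 := by
          by_contra hne
          have h2j : 2 ≤ j := by omega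
          have hle : p ^ 2 ≤ p ^ j := Nat.pow_le_pow_right (by omega) h2j
          have hlt : k < p ^ 2 := Nat.sqrt_lt'.mp hsq
          omega
        rw [hj1, pow_one] at hqk ⊢
        obtain ⟨h1, h2, h3⟩ := hres p hp hsq hqk
        have hymp : y % p < p := Nat.mod_lt _ hp.pos
        have hkmp : k % p < p := Nat.mod_lt _ hp.pos
        have hkmp1 : 1 ≤ k % p := by omega
        refine ⟨count_x p k x hp.pos hx h1 (by omega), count_y1 p k y hp.pos hy hkmp1 h3⟩
    rw [hAB.1, hAB.2, hC]
    split_ifs <;> omega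
  · -- large prime power case
    have hA1 : (Finset.filter (p ^ j ∣ ·) (Icc y (y + k))).card ≤ 1 :=
      count_le_one _ _ _ hq0 hy (by omega)
    have hB1 : (Finset.filter (p ^ j ∣ ·) (Icc x (x + k - 1))).card ≤ 1 :=
      count_le_one _ _ _ hq0 hx (by omega)
    have hC0 : k / p ^ j = 0 := Nat.div_eq_of_lt (by omega)
    rw [hC, hC0]
    split_ifs <;> omega
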